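/- Let φ(x) := inf_y {f(x,y) | g(x,y) ≤ 0} with f, g continuously differentiable, let (x̄, ȳ) be feasible for the bilevel problem (i.e., g(x̄,ȳ) ≤ 0 and f(x̄,ȳ) = φ(x̄)), and suppose φ is locally Lipschitz continuous and directionally differentiable at x̄, and Abadie's constraint qualification holds for the set {(x,y) | g(x,y) ≤ 0} at (x̄,ȳ). Then for every direction d = (δ_x, δ_y) with ∇g_i(x̄,ȳ)ᵀd ≤ 0 for all active indices i (those with g_i(x̄,ȳ) = 0), one has ∇f(x̄,ȳ)ᵀd − φ'(x̄; δ_x) ≥ 0. -/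

import Mathlib

open Filter Topology

/-- The Bouligand (contingent) tangent cone to `X` at `x₀`. -/
def bouligandTangentCone {E : Type*} [NormedAddCommGroup E] [NormedSpace ℝ E]
    (X : Set E) (x₀ : E) : Set E :=
  {d | ∃ (t : ℕ → ℝ) (v : ℕ → E), (∀ k, 0 < t k) ∧ Tendsto t atTop (𝓝 0) ∧
    Tendsto v atTop (𝓝 d) ∧ ∀ k, x₀ + t k • v k ∈ X}

theorem no_decrease_in_optimal_value_constraint {n m q : ℕ}
    (f : ((Fin n → ℝ) × (Fin m → ℝ)) → ℝ)
    (g : ((Fin n → ℝ) × (Fin m → ℝ)) → Fin q → ℝ)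
    (hf : ContDiff ℝ 1 f) (hg : ∀ i, ContDiff ℝ 1 (fun p => g p i))
    (x₀ : Fin n → ℝ) (y₀ : Fin m → ℝ)
    (φ : (Fin n → ℝ) → ℝ)
    (hφ : ∀ x, (φ x : EReal) =
      sInf {v : EReal | ∃ y : Fin m → ℝ, (∀ i, g (x, y) i ≤ 0) ∧ v = ((f (x, y) : ℝ) : EReal)})
    (hfeas : ∀ i, g (x₀, y₀) i ≤ 0) (hval : f (x₀, y₀) = φ x₀)
    (hlip : ∃ (K : NNReal) (s : Set (Fin n → ℝ)), s ∈ 𝓝 x₀ ∧ LipschitzOnWith K φ s)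
    (Dφ : (Fin n → ℝ) → ℝ)
    (hDφ : ∀ δ, Tendsto (fun t : ℝ => (φ (x₀ + t • δ) - φ x₀) / t) (𝓝[>] 0) (𝓝 (Dφ δ)))
    (hACQ : bouligandTangentCone
        {p : (Fin n → ℝ) × (Fin m → ℝ) | ∀ i, g p i ≤ 0} (x₀, y₀) =
      {d : (Fin n → ℝ) × (Fin m → ℝ) | ∀ i, g (x₀, y₀) i = 0 →
        fderiv ℝ (fun p => g p i) (x₀, y₀) d ≤ 0}) :
    ∀ d : (Fin n → ℝ) × (Fin m → ℝ),
      (∀ i, g (x₀, y₀) i = 0 → fderiv ℝ (fun p => g p i) (x₀, y₀) d ≤ 0) →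
      0 ≤ fderiv ℝ f (x₀, y₀) d - Dφ d.1 := by
  intro d hd
  have hdT : d ∈ bouligandTangentCone
      {p : (Fin n → ℝ) × (Fin m → ℝ) | ∀ i, g p i ≤ 0} (x₀, y₀) := by
    rw [hACQ]; exact hd
  obtain ⟨t, v, ht0, htlim, hvlim, hmem⟩ := hdT
  set A := fderiv ℝ f (x₀, y₀) with hA
  set p : ℕ → (Fin n → ℝ) × (Fin m → ℝ) := fun k => (x₀, y₀) + t k • v k with hp
  -- φ x ≤ f (x, y) whenever (x, y) is feasible
  have key : ∀ x y, (∀ i, g (x, y) i ≤ 0) → φ x ≤ f (x, y) := by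
    intro x y hxy
    have h1 : ((φ x : ℝ) : EReal) ≤ ((f (x, y) : ℝ) : EReal) := by
      rw [hφ x]; exact sInf_le ⟨y, hxy, rfl⟩
    exact_mod_cast h1
  -- sequences
  set a : ℕ → ℝ := fun k => (f (p k) - f (x₀, y₀)) / t k with ha
  set b : ℕ → ℝ := fun k => (φ (x₀ + t k • (v k).1) - φ x₀) / t k with hb
  have hp1 : ∀ k, (p k).1 = x₀ + t k • (v k).1 := fun k => rfl
  have hab : ∀ k, b k ≤ a k := by
    intro k
    have hfeask : ∀ i, g ((p k).1, (p k).2) i ≤ 0 := by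
      rw [Prod.mk.eta]; exact hmem k
    have h1 : φ (x₀ + t k • (v k).1) ≤ f (p k) := by
      have := key (p k).1 (p k).2 hfeask
      rwa [Prod.mk.eta, hp1 k] at this
    exact div_le_div_of_nonneg_right (by linarith [hval]) (ht0 k).le |>.trans_eq rfl
  -- limit of a
  have hplim : Tendsto p atTop (𝓝 (x₀, y₀)) := by
    have : Tendsto (fun k => t k • v k) atTop (𝓝 ((0 : ℝ) • d)) := htlim.smul hvlim
    rw [zero_smul] at this
    simpa using tendsto_const_nhds.add this
  have hfd : HasFDerivAt f A (x₀, y₀) :=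
    ((hf.differentiable one_ne_zero) (x₀, y₀)).hasFDerivAt
  have halim : Tendsto a atTop (𝓝 (A d)) := by
    have hlo : (fun k => f (p k) - f (x₀, y₀) - A (p k - (x₀, y₀))) =o[atTop]
        (fun k => p k - (x₀, y₀)) :=
      (hfd.isLittleO).comp_tendsto hplim
    have hC : ∀ᶠ k in atTop, ‖v k‖ ≤ ‖d‖ + 1 :=
      (hvlim.norm.eventually_lt_const (lt_add_one _)).mono fun k hk => hk.le
    set C : ℝ := ‖d‖ + 1 with hCdef
    have hr : Tendsto (fun k => a k - A (v k)) atTop (𝓝 0) := by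
      rw [NormedAddCommGroup.tendsto_nhds_zero]
      intro ε hε
      have hC' : (0:ℝ) < C + 1 := by positivity
      have hsmall := hlo.def (c := ε / (2 * (C + 1))) (by positivity)
      filter_upwards [hsmall, hC] with k hk hkC
      have htk := ht0 k
      have hpk : p k - (x₀, y₀) = t k • v k := by simp [hp]
      have hnorm : ‖p k - (x₀, y₀)‖ = t k * ‖v k‖ := by
        rw [hpk, norm_smul, Real.norm_eq_abs, abs_of_pos htk]
      have hAv : A (p k - (x₀, y₀)) = t k * A (v k) := by
        rw [hpk, map_smul]; simp
      have : ‖f (p k) - f (x₀, y₀) - t k * A (v k)‖ ≤ ε / (2 * (C + 1)) * (t k * ‖v k‖) := by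
        rw [← hAv, ← hnorm]; exact hk
      have htkne : t k ≠ 0 := ne_of_gt htk
      have h2' : a k - A (v k) = (f (p k) - f (x₀, y₀) - t k * A (v k)) / t k := by
        rw [ha]; field_simp
      rw [h2', norm_div, Real.norm_eq_abs (t k), abs_of_pos htk]
      calc ‖f (p k) - f (x₀, y₀) - t k * A (v k)‖ / t k
          ≤ (ε / (2 * (C + 1)) * (t k * ‖v k‖)) / t k := by
            exact div_le_div_of_nonneg_right this htk.le
        _ = ε / (2 * (C + 1)) * ‖v k‖ := by field_simp
        _ ≤ ε / (2 * (C + 1)) * (C + 1) := by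
            apply mul_le_mul_of_nonneg_left _ (by positivity)
            linarith
        _ < ε := by
            rw [div_mul_eq_mul_div, mul_comm (2 : ℝ), ← div_div, mul_div_assoc]
            rw [div_self (by positivity : (C+1 : ℝ) ≠ 0), mul_one]
            linarith
    have hAv : Tendsto (fun k => A (v k)) atTop (𝓝 (A d)) :=
      (A.continuous.tendsto d).comp hvlim
    have := hr.add hAv
    rw [zero_add] at this
    simpa using this
  -- limit of b
  obtain ⟨K, s, hs, hK⟩ := hlip
  set c : ℕ → ℝ :=
    fun k => (φ (x₀ + t k • (v k).1) - φ (x₀ + t k • d.1)) / t k with hc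
  set e : ℕ → ℝ := fun k => (φ (x₀ + t k • d.1) - φ x₀) / t k with he
  have hbce : ∀ k, b k = c k + e k := by
    intro k
    rw [hb, hc, he, ← add_div, sub_add_sub_cancel]
  have hv1lim : Tendsto (fun k => (v k).1) atTop (𝓝 d.1) :=
    (continuous_fst.tendsto d).comp hvlim
  have hq1 : Tendsto (fun k => x₀ + t k • (v k).1) atTop (𝓝 x₀) := by
    have : Tendsto (fun k => t k • (v k).1) atTop (𝓝 ((0:ℝ) • d.1)) := htlim.smul hv1lim
    rw [zero_smul] at this
    simpa using tendsto_const_nhds.add this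
  have hq2 : Tendsto (fun k => x₀ + t k • d.1) atTop (𝓝 x₀) := by
    have : Tendsto (fun k => t k • d.1) atTop (𝓝 ((0:ℝ) • d.1)) :=
      htlim.smul tendsto_const_nhds
    rw [zero_smul] at this
    simpa using tendsto_const_nhds.add this
  have hclim : Tendsto c atTop (𝓝 0) := by
    apply squeeze_zero_norm' (a := fun k => (K : ℝ) * ‖(v k).1 - d.1‖)
    · filter_upwards [hq1.eventually_mem hs, hq2.eventually_mem hs] with k h1 h2
      have htk := ht0 k
      have hd1 : dist (φ (x₀ + t k • (v k).1)) (φ (x₀ + t k • d.1)) ≤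
          K * dist (x₀ + t k • (v k).1) (x₀ + t k • d.1) := hK.dist_le_mul _ h1 _ h2
      have hdd : dist (x₀ + t k • (v k).1) (x₀ + t k • d.1) = t k * ‖(v k).1 - d.1‖ := by
        rw [dist_eq_norm]
        have : (x₀ + t k • (v k).1) - (x₀ + t k • d.1) = t k • ((v k).1 - d.1) := by
          rw [smul_sub]; abel
        rw [this, norm_smul, Real.norm_eq_abs, abs_of_pos htk]
      rw [hc]
      rw [norm_div, Real.norm_eq_abs, Real.norm_eq_abs, abs_of_pos htk]
      rw [← Real.dist_eq] at *
      rw [div_le_iff₀ htk]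
      calc dist (φ (x₀ + t k • (v k).1)) (φ (x₀ + t k • d.1))
          ≤ K * (t k * ‖(v k).1 - d.1‖) := by rw [← hdd]; exact hd1
        _ = K * ‖(v k).1 - d.1‖ * t k := by ring
    · have : Tendsto (fun k => (v k).1 - d.1) atTop (𝓝 (d.1 - d.1)) :=
        hv1lim.sub tendsto_const_nhds
      rw [sub_self] at this
      have := (this.norm).const_mul (K : ℝ)
      simpa using this
  have helim : Tendsto e atTop (𝓝 (Dφ d.1)) := by
    have htlim' : Tendsto t atTop (𝓝[>] 0) := by
      rw [tendsto_nhdsWithin_iff]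
      exact ⟨htlim, Eventually.of_forall fun k => ht0 k⟩
    exact (hDφ d.1).comp htlim'
  have hblim : Tendsto b atTop (𝓝 (Dφ d.1)) := by
    have := hclim.add helim
    rw [zero_add] at this
    exact this.congr fun k => (hbce k).symm
  have hle : Dφ d.1 ≤ A d := le_of_tendsto_of_tendsto' hblim halim hab
  linarith
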